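/- arXiv:2403.16661 — 4 statements merged into one kernel-verified Lean document; each statement's English description precedes it below -/
import Mathlib

section
/- Let H be an 8×8 real matrix. Then: (a) if H is symmetric with zero trace (Σ_p H_{pp} = 0) then J₄(K(H)) = 0; (b) if H is antisymmetric then J₄(K(H)) = −6 K(H); (c) for H = δ (the identity matrix), J₄(K(δ)) = −12 K(δ). Hence Λ⁴₃₅, Λ⁴₇ and Λ⁴₁ are eigenspaces of J₄ with eigenvalues 0, −6 and −12 respectively. -/
namespace Spin7

noncomputable section

/-- Kronecker delta on `Fin 8`. -/
def kron (i j : Fin 8) : ℝ := if i = j then 1 else 0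

/-- A 2-form: totally antisymmetric 2-tensor. -/
def Alt2 (β : Fin 8 → Fin 8 → ℝ) : Prop := ∀ i j, β i j = -β j i

/-- A 3-form: totally antisymmetric 3-tensor. -/
def Alt3 (γ : Fin 8 → Fin 8 → Fin 8 → ℝ) : Prop :=
  ∀ i j k, γ i j k = -γ j i k ∧ γ i j k = -γ i k j

/-- A 4-form: totally antisymmetric 4-tensor. -/
def Alt4 (Φ : Fin 8 → Fin 8 → Fin 8 → Fin 8 → ℝ) : Prop :=
  ∀ i j k l, Φ i j k l = -Φ j i k l ∧ Φ i j k l = -Φ i k j l ∧ Φ i j k l = -Φ i j l k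

/-- The Cayley contraction identity for a 4-form `Φ`. -/
def Cayley (Φ : Fin 8 → Fin 8 → Fin 8 → Fin 8 → ℝ) : Prop :=
  ∀ i j k a b c : Fin 8,
    (∑ p, Φ i j k p * Φ a b c p) =
      kron i a * kron j b * kron k c + kron i b * kron j c * kron k a
        + kron i c * kron j a * kron k b
      - kron i a * kron j c * kron k b - kron i c * kron j b * kron k a
      - kron i b * kron j a * kron k c
      - kron i a * Φ j k b c - kron j a * Φ k i b c - kron k a * Φ i j b c
      - kron i b * Φ j k c a - kron j b * Φ k i c a - kron k b * Φ i j c a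
      - kron i c * Φ j k a b - kron j c * Φ k i a b - kron k c * Φ i j a b

/-- The operator J₂ on 2-forms: `J₂(β)_{ij} = ½ Φ_{ijab} β_{ab}`. -/
def J2 (Φ : Fin 8 → Fin 8 → Fin 8 → Fin 8 → ℝ) (β : Fin 8 → Fin 8 → ℝ) :
    Fin 8 → Fin 8 → ℝ :=
  fun i j => (1/2 : ℝ) * ∑ a, ∑ b, Φ i j a b * β a b

/-- π₇ = ¼(Id − J₂). -/
def pi7 (Φ : Fin 8 → Fin 8 → Fin 8 → Fin 8 → ℝ) (β : Fin 8 → Fin 8 → ℝ) :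
    Fin 8 → Fin 8 → ℝ :=
  fun i j => (1/4 : ℝ) * (β i j - J2 Φ β i j)

/-- π₂₁ = ¼(3·Id + J₂). -/
def pi21 (Φ : Fin 8 → Fin 8 → Fin 8 → Fin 8 → ℝ) (β : Fin 8 → Fin 8 → ℝ) :
    Fin 8 → Fin 8 → ℝ :=
  fun i j => (1/4 : ℝ) * (3 * β i j + J2 Φ β i j)

/-- The operator J₃ on 3-forms. -/
def J3 (Φ : Fin 8 → Fin 8 → Fin 8 → Fin 8 → ℝ) (γ : Fin 8 → Fin 8 → Fin 8 → ℝ) :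
    Fin 8 → Fin 8 → Fin 8 → ℝ :=
  fun i j k => (1/2 : ℝ) *
    ∑ p, ∑ q, (Φ i j p q * γ k p q + Φ j k p q * γ i p q + Φ k i p q * γ j p q)

/-- π₈ = (1/7)(Id − J₃). -/
def pi8 (Φ : Fin 8 → Fin 8 → Fin 8 → Fin 8 → ℝ) (γ : Fin 8 → Fin 8 → Fin 8 → ℝ) :
    Fin 8 → Fin 8 → Fin 8 → ℝ :=
  fun i j k => (1/7 : ℝ) * (γ i j k - J3 Φ γ i j k)

/-- π₄₈ = (6/7)(Id + (1/6)J₃). -/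
def pi48 (Φ : Fin 8 → Fin 8 → Fin 8 → Fin 8 → ℝ) (γ : Fin 8 → Fin 8 → Fin 8 → ℝ) :
    Fin 8 → Fin 8 → Fin 8 → ℝ :=
  fun i j k => (6/7 : ℝ) * (γ i j k + (1/6 : ℝ) * J3 Φ γ i j k)

/-- The operator J₄ on 4-forms. -/
def J4 (Φ σ : Fin 8 → Fin 8 → Fin 8 → Fin 8 → ℝ) :
    Fin 8 → Fin 8 → Fin 8 → Fin 8 → ℝ :=
  fun i j k l => (1/2 : ℝ) * ∑ p, ∑ q,
    (Φ i j p q * σ p q k l + Φ k i p q * σ p q j l + Φ i l p q * σ p q j k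
      + Φ k l p q * σ p q i j + Φ j l p q * σ p q k i + Φ j k p q * σ p q i l)

/-- Antisymmetrization with weight 1/4! over four `Fin 8` indices. -/
def asym4 (g : Fin 8 → Fin 8 → Fin 8 → Fin 8 → ℝ) (i j k l : Fin 8) : ℝ :=
  (1/24 : ℝ) * ∑ τ : Equiv.Perm (Fin 4),
    ((Equiv.Perm.sign τ : ℤ) : ℝ) *
      g (![i, j, k, l] (τ 0)) (![i, j, k, l] (τ 1)) (![i, j, k, l] (τ 2)) (![i, j, k, l] (τ 3))

/-- Simultaneous antisymmetrization (weight 1/4! each) over a lower group of four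
indices and an upper group of four indices. -/
def asym44 (F : Fin 8 → Fin 8 → Fin 8 → Fin 8 → Fin 8 → Fin 8 → Fin 8 → Fin 8 → ℝ)
    (i j k l a b c d : Fin 8) : ℝ :=
  asym4 (fun i' j' k' l' => asym4 (F i' j' k' l') a b c d) i j k l

/-- The projector π₂₇ on 4-forms. -/
def pi27 (Φ σ : Fin 8 → Fin 8 → Fin 8 → Fin 8 → ℝ) :
    Fin 8 → Fin 8 → Fin 8 → Fin 8 → ℝ :=
  fun i j k l => (3/32 : ℝ) *
    (asym4 (fun i' j' k' l' =>
        ∑ a, ∑ b, ∑ c, ∑ d, Φ i' j' a b * Φ k' l' c d * σ a b c d) i j k l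
      - 4 * asym4 (fun i' j' k' l' => ∑ a, ∑ b, Φ i' j' a b * σ k' l' a b) i j k l
      - (1/7 : ℝ) * Φ i j k l * (∑ a, ∑ b, ∑ c, ∑ d, Φ a b c d * σ a b c d)
      + 4 * σ i j k l)

/-- The map `K(H)_{ijkl} = H_{ip}Φ_{pjkl} − H_{jp}Φ_{pikl} + H_{kp}Φ_{pijl} − H_{lp}Φ_{pijk}`. -/
def Kmap (Φ : Fin 8 → Fin 8 → Fin 8 → Fin 8 → ℝ) (H : Fin 8 → Fin 8 → ℝ) :
    Fin 8 → Fin 8 → Fin 8 → Fin 8 → ℝ :=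
  fun i j k l => ∑ p,
    (H i p * Φ p j k l - H j p * Φ p i k l + H k p * Φ p i j l - H l p * Φ p i j k)

/-- The map `K'(σ)_{ij} = ½ Φ_{ipqr} σ_{jpqr} − ½ Φ_{jpqr} σ_{ipqr}`. -/
def Kprime (Φ σ : Fin 8 → Fin 8 → Fin 8 → Fin 8 → ℝ) : Fin 8 → Fin 8 → ℝ :=
  fun i j => (1/2 : ℝ) * ∑ p, ∑ q, ∑ r, (Φ i p q r * σ j p q r - Φ j p q r * σ i p q r)

/-- The totally antisymmetric Levi-Civita symbol on 8 indices with `ε_{12345678} = 1`. -/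
def eps8 (v : Fin 8 → Fin 8) : ℝ :=
  Matrix.det (Matrix.of fun r c => if v r = c then (1 : ℝ) else 0)

/-- Self-duality of the 4-form `Φ`. -/
def SelfDual (Φ : Fin 8 → Fin 8 → Fin 8 → Fin 8 → ℝ) : Prop :=
  ∀ i j k l, (1/24 : ℝ) *
    (∑ a, ∑ b, ∑ c, ∑ d, eps8 ![i, j, k, l, a, b, c, d] * Φ a b c d) = Φ i j k l

/-- Antisymmetrization with weight 1/5! over five `Fin 8` indices. -/
def asym5 (g : Fin 8 → Fin 8 → Fin 8 → Fin 8 → Fin 8 → ℝ) (a i j k l : Fin 8) : ℝ :=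
  (1/120 : ℝ) * ∑ τ : Equiv.Perm (Fin 5),
    ((Equiv.Perm.sign τ : ℤ) : ℝ) *
      g (![a, i, j, k, l] (τ 0)) (![a, i, j, k, l] (τ 1)) (![a, i, j, k, l] (τ 2))
        (![a, i, j, k, l] (τ 3)) (![a, i, j, k, l] (τ 4))

-- ====== auxiliary development ======

def Amap (Φ : Fin 8 → Fin 8 → Fin 8 → Fin 8 → ℝ) (H : Fin 8 → Fin 8 → ℝ) (x y z w : Fin 8) : ℝ :=
  ∑ p, H p x * Φ p y z w
def Bmap (Φ : Fin 8 → Fin 8 → Fin 8 → Fin 8 → ℝ) (H : Fin 8 → Fin 8 → ℝ) (x y z w : Fin 8) : ℝ :=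
  ∑ p, H x p * Φ p y z w
def Mmap (Φ : Fin 8 → Fin 8 → Fin 8 → Fin 8 → ℝ) (H : Fin 8 → Fin 8 → ℝ) (x y : Fin 8) : ℝ :=
  ∑ p, ∑ r, H p r * Φ x p y r

lemma kron_comm (a b : Fin 8) : kron a b = kron b a := by simp [kron, eq_comm]

section Aux
variable {Φ : Fin 8 → Fin 8 → Fin 8 → Fin 8 → ℝ}
variable (hΦ : Alt4 Φ)
include hΦ

lemma p12 (a b c d) : Φ a b c d = -Φ b a c d := (hΦ a b c d).1
lemma p23 (a b c d) : Φ a b c d = -Φ a c b d := (hΦ a b c d).2.1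
lemma p34 (a b c d) : Φ a b c d = -Φ a b d c := (hΦ a b c d).2.2
lemma p13 (a b c d) : Φ a b c d = -Φ c b a d := by
  have h1 := p12 hΦ a b c d; have h2 := p23 hΦ b a c d; have h3 := p12 hΦ b c a d
  linarith
lemma p14 (a b c d) : Φ a b c d = -Φ d b c a := by
  have h1 := p34 hΦ a b c d; have h2 := p13 hΦ a b d c; have h3 := p34 hΦ d b a c
  linarith
lemma p24 (a b c d) : Φ a b c d = -Φ a d c b := by
  have h1 := p34 hΦ a b c d; have h2 := p23 hΦ a b d c; have h3 := p34 hΦ a d b c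
  linarith
lemma z23 (x y z : Fin 8) : Φ x y y z = 0 := by have := p23 hΦ x y y z; linarith
lemma z24 (x y z : Fin 8) : Φ x y z y = 0 := by have := p24 hΦ x y z y; linarith
lemma z13 (x y z : Fin 8) : Φ x y x z = 0 := by have := p13 hΦ x y x z; linarith
lemma z14 (x y z : Fin 8) : Φ x y z x = 0 := by have := p14 hΦ x y z x; linarith

-- even permutations used later
lemma e_kijl (i j k l) : Φ k i j l = Φ i j k l := by
  have h1 := p12 hΦ k i j l; have h2 := p23 hΦ i k j l; linarith
lemma e_iljk (i j k l) : Φ i l j k = Φ i j k l := by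
  have h1 := p23 hΦ i l j k; have h2 := p34 hΦ i j l k; linarith
lemma e_klij (i j k l) : Φ k l i j = Φ i j k l := by
  have h1 := e_kijl hΦ i j k l; have h2 := e_iljk hΦ k i j l
  have h3 := e_iljk hΦ k l i j
  -- Φ k l i j = Φ k i j l = Φ i j k l
  linarith [e_iljk hΦ k i j l]
lemma e_jlki (i j k l) : Φ j l k i = Φ i j k l := by
  have h1 := e_klij hΦ j l k i  -- Φ k i j l? e_klij with (i,j,k,l):=(j,l,k,i) : Φ k i j l = Φ j l k i
  have h2 := e_kijl hΦ i j k l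
  linarith
lemma e_jkil (i j k l) : Φ j k i l = Φ i j k l := by
  have h1 := e_kijl hΦ j k i l  -- Φ i j k l? e_kijl (i,j,k,l):=(j,k,i,l): Φ i j k l = Φ j k i l
  linarith
lemma o_lijk (i j k l) : Φ l i j k = -Φ i j k l := by
  have h1 := p12 hΦ l i j k; have h2 := e_iljk hΦ i l j k
  have h3 := e_iljk hΦ i j k l
  -- Φ l i j k = -Φ i l j k = -Φ i j k l? e_iljk hΦ i j k l : Φ i l j k = Φ i j k l
  linarith [e_iljk hΦ i j k l]

-- A/B antisymmetry in last three slots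
lemma A23 (H : Fin 8 → Fin 8 → ℝ) (x y z w) : Amap Φ H x y z w = -Amap Φ H x z y w := by
  unfold Amap
  rw [← Finset.sum_neg_distrib]
  exact Finset.sum_congr rfl fun p _ => by rw [p23 hΦ p y z w]; ring
lemma A34 (H : Fin 8 → Fin 8 → ℝ) (x y z w) : Amap Φ H x y z w = -Amap Φ H x y w z := by
  unfold Amap
  rw [← Finset.sum_neg_distrib]
  exact Finset.sum_congr rfl fun p _ => by rw [p34 hΦ p y z w]; ring
lemma A24 (H : Fin 8 → Fin 8 → ℝ) (x y z w) : Amap Φ H x y z w = -Amap Φ H x w z y := by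
  have h1 := A34 hΦ H x y z w; have h2 := A23 hΦ H x y w z; have h3 := A34 hΦ H x w y z
  linarith
lemma Ae1 (H : Fin 8 → Fin 8 → ℝ) (x y z w) : Amap Φ H x y z w = Amap Φ H x w y z := by
  have h1 := A34 hΦ H x y z w; have h2 := A23 hΦ H x y w z; linarith
lemma Ae2 (H : Fin 8 → Fin 8 → ℝ) (x y z w) : Amap Φ H x y z w = Amap Φ H x z w y := by
  have h1 := Ae1 hΦ H x z w y; linarith
lemma B23 (H : Fin 8 → Fin 8 → ℝ) (x y z w) : Bmap Φ H x y z w = -Bmap Φ H x z y w := by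
  unfold Bmap
  rw [← Finset.sum_neg_distrib]
  exact Finset.sum_congr rfl fun p _ => by rw [p23 hΦ p y z w]; ring
lemma B34 (H : Fin 8 → Fin 8 → ℝ) (x y z w) : Bmap Φ H x y z w = -Bmap Φ H x y w z := by
  unfold Bmap
  rw [← Finset.sum_neg_distrib]
  exact Finset.sum_congr rfl fun p _ => by rw [p34 hΦ p y z w]; ring
lemma B24 (H : Fin 8 → Fin 8 → ℝ) (x y z w) : Bmap Φ H x y z w = -Bmap Φ H x w z y := by
  have h1 := B34 hΦ H x y z w; have h2 := B23 hΦ H x y w z; have h3 := B34 hΦ H x w y z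
  linarith
lemma Be1 (H : Fin 8 → Fin 8 → ℝ) (x y z w) : Bmap Φ H x y z w = Bmap Φ H x w y z := by
  have h1 := B34 hΦ H x y z w; have h2 := B23 hΦ H x y w z; linarith
lemma Be2 (H : Fin 8 → Fin 8 → ℝ) (x y z w) : Bmap Φ H x y z w = Bmap Φ H x z w y := by
  have h1 := Be1 hΦ H x z w y; linarith
lemma Mskew (H : Fin 8 → Fin 8 → ℝ) (x y) : Mmap Φ H x y = -Mmap Φ H y x := by
  unfold Mmap
  rw [← Finset.sum_neg_distrib]
  refine Finset.sum_congr rfl fun p _ => ?_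
  rw [← Finset.sum_neg_distrib]
  exact Finset.sum_congr rfl fun r _ => by rw [p13 hΦ x p y r]; ring

variable (hC : Cayley Φ)
include hC

lemma contract2 (a b c d : Fin 8) :
    ∑ p, ∑ q, Φ a b p q * Φ c d p q
      = 6 * (kron a c * kron b d) - 6 * (kron a d * kron b c) - 4 * Φ a b c d := by
  have step1 : ∑ p, ∑ q, Φ a b p q * Φ c d p q
      = ∑ q, ∑ p, Φ a b q p * Φ c d q p := by
    rw [Finset.sum_comm]
  rw [step1]
  rw [Finset.sum_congr rfl fun q _ => hC a b q c d q]
  simp only [z23 hΦ, z24 hΦ, z13 hΦ, z14 hΦ, mul_zero, sub_zero]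
  simp only [Finset.sum_sub_distrib, Finset.sum_add_distrib]
  simp [kron, ite_mul, mul_ite, Finset.sum_ite_eq, Finset.sum_ite_eq']
  rw [p34 hΦ a b d c, p12 hΦ b a c d]
  split_ifs <;> ring

lemma T1eval (H : Fin 8 → Fin 8 → ℝ) (a b c d : Fin 8) :
    ∑ p, ∑ q, Φ a b p q * (∑ r, H p r * Φ r q c d)
      = kron b c * H d a + kron a c * kron b d * (∑ x, H x x) + kron a d * H c b
        - kron b d * H c a - kron a d * kron b c * (∑ x, H x x) - kron a c * H d b
        + Amap Φ H a b c d - Amap Φ H b a c d - (∑ x, H x x) * Φ a b c d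
        - kron a c * Mmap Φ H b d + kron b c * Mmap Φ H a d + kron a d * Mmap Φ H b c
        - kron b d * Mmap Φ H a c + Bmap Φ H c a b d - Bmap Φ H d a b c := by
  have e1 : ∀ p q r : Fin 8, Φ a b p q * (H p r * Φ r q c d)
      = H p r * (Φ a b p q * Φ r c d q) := by
    intro p q r
    have h1 := p23 hΦ r q c d
    have h2 := p34 hΦ r c q d
    have : Φ r q c d = Φ r c d q := by linarith
    rw [this]; ring
  have step1 : ∑ p, ∑ q, Φ a b p q * (∑ r, H p r * Φ r q c d)
      = ∑ p, ∑ r, H p r * ∑ q, Φ a b p q * Φ r c d q := by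
    refine Finset.sum_congr rfl fun p _ => ?_
    rw [show (∑ q, Φ a b p q * (∑ r, H p r * Φ r q c d))
        = ∑ q, ∑ r, Φ a b p q * (H p r * Φ r q c d) by
      simp [Finset.mul_sum]]
    rw [Finset.sum_comm]
    refine Finset.sum_congr rfl fun r _ => ?_
    rw [Finset.mul_sum]
    exact Finset.sum_congr rfl fun q _ => e1 p q r
  rw [step1]
  have key : ∀ p r : Fin 8, H p r * (∑ q, Φ a b p q * Φ r c d q)
      = kron b c * (kron a r * kron p d * H p r)
        + kron a c * kron b d * (kron p r * H p r)
        + kron a d * (kron b r * kron p c * H p r)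
        - kron b d * (kron a r * kron p c * H p r)
        - kron a d * kron b c * (kron p r * H p r)
        - kron a c * (kron b r * kron p d * H p r)
        + kron a r * (H p r * Φ p b c d)
        - kron b r * (H p r * Φ p a c d)
        - kron p r * H p r * Φ a b c d
        - kron a c * (H p r * Φ b p d r)
        + kron b c * (H p r * Φ a p d r)
        + kron p c * (H p r * Φ r a b d)
        + kron a d * (H p r * Φ b p c r)
        - kron b d * (H p r * Φ a p c r)
        - kron p d * (H p r * Φ r a b c) := by
    intro p r
    rw [hC a b p r c d]
    have h7 : Φ b p c d = -Φ p b c d := p12 hΦ b p c d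
    have h11 : Φ p a d r = -Φ a p d r := p12 hΦ p a d r
    have h12 : Φ a b d r = -Φ r a b d := by
      have x1 := p34 hΦ a b d r; have x2 := p23 hΦ a b r d; have x3 := p12 hΦ a r b d
      linarith
    have h13 : Φ b p r c = -Φ b p c r := p34 hΦ b p r c
    have h14 : Φ p a r c = Φ a p c r := by
      have x1 := p12 hΦ p a r c; have x2 := p34 hΦ a p r c
      linarith
    have h15 : Φ a b r c = Φ r a b c := by
      have x1 := p23 hΦ a b r c; have x2 := p12 hΦ a r b c
      linarith
    rw [h7, h11, h12, h13, h14, h15]; ring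
  rw [Finset.sum_congr rfl fun p _ => Finset.sum_congr rfl fun r _ => key p r]
  simp only [Finset.sum_add_distrib, Finset.sum_sub_distrib]
  simp [Amap, Bmap, Mmap, kron, ite_mul, mul_ite, Finset.sum_ite_eq, Finset.sum_ite_eq',
    Finset.mul_sum, mul_comm, mul_left_comm]
  ring

lemma Teval (H : Fin 8 → Fin 8 → ℝ) (a b c d : Fin 8) :
    ∑ p, ∑ q, Φ a b p q * Kmap Φ H p q c d
      = 4 * (kron b d * H c a + kron a c * H d b - kron b c * H d a - kron a d * H c b)
        + 2 * (∑ x, H x x) * (kron a c * kron b d - kron a d * kron b c)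
        - 2 * (∑ x, H x x) * Φ a b c d
        + 2 * Amap Φ H a b c d - 2 * Amap Φ H b a c d
        - 2 * Bmap Φ H c a b d + 2 * Bmap Φ H d a b c
        + 2 * (kron b c * Mmap Φ H a d + kron a d * Mmap Φ H b c
            - kron a c * Mmap Φ H b d - kron b d * Mmap Φ H a c) := by
  have hK : ∀ p q : Fin 8, Φ a b p q * Kmap Φ H p q c d
      = Φ a b p q * (∑ r, H p r * Φ r q c d) - Φ a b p q * (∑ r, H q r * Φ r p c d)
        + Φ a b p q * (∑ r, H c r * Φ r p q d) - Φ a b p q * (∑ r, H d r * Φ r p q c) := by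
    intro p q
    have : Kmap Φ H p q c d = (∑ r, H p r * Φ r q c d) - (∑ r, H q r * Φ r p c d)
        + (∑ r, H c r * Φ r p q d) - (∑ r, H d r * Φ r p q c) := by
      unfold Kmap
      simp only [Finset.sum_add_distrib, Finset.sum_sub_distrib]
    rw [this]; ring
  rw [Finset.sum_congr rfl fun p _ => Finset.sum_congr rfl fun q _ => hK p q]
  simp only [Finset.sum_add_distrib, Finset.sum_sub_distrib]
  have hS2 : ∑ p, ∑ q, Φ a b p q * (∑ r, H q r * Φ r p c d)
      = -∑ p, ∑ q, Φ a b p q * (∑ r, H p r * Φ r q c d) := by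
    rw [Finset.sum_comm, ← Finset.sum_neg_distrib]
    refine Finset.sum_congr rfl fun p _ => ?_
    rw [← Finset.sum_neg_distrib]
    refine Finset.sum_congr rfl fun q _ => ?_
    rw [p34 hΦ a b q p]; ring
  have hS3 : ∀ e : Fin 8, ∑ p, ∑ q, Φ a b p q * (∑ r, H e r * Φ r p q d)
      = 6 * (kron b d * H e a) - 6 * (kron a d * H e b) - 4 * Bmap Φ H e a b d := by
    intro e
    have e3 : ∀ p q : Fin 8, Φ a b p q * (∑ r, H e r * Φ r p q d)
        = ∑ r, H e r * (Φ a b p q * Φ r d p q) := by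
      intro p q
      rw [Finset.mul_sum]
      refine Finset.sum_congr rfl fun r _ => ?_
      have x1 := p34 hΦ r p q d
      have x2 := p23 hΦ r p d q
      have : Φ r p q d = Φ r d p q := by linarith
      rw [this]; ring
    rw [Finset.sum_congr rfl fun p _ => Finset.sum_congr rfl fun q _ => e3 p q]
    rw [Finset.sum_congr rfl fun p _ => Finset.sum_comm, Finset.sum_comm]
    have e4 : ∀ r : Fin 8, ∑ p, ∑ q, H e r * (Φ a b p q * Φ r d p q)
        = H e r * (6 * (kron a r * kron b d) - 6 * (kron a d * kron b r) - 4 * Φ r a b d) := by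
      intro r
      rw [show (∑ p, ∑ q, H e r * (Φ a b p q * Φ r d p q))
          = H e r * ∑ p, ∑ q, Φ a b p q * Φ r d p q by
        simp [Finset.mul_sum]]
      rw [contract2 hΦ hC a b r d]
      have x1 := p23 hΦ a b r d
      have x2 := p12 hΦ a r b d
      have : Φ a b r d = Φ r a b d := by linarith
      rw [this]
    rw [Finset.sum_congr rfl fun r _ => e4 r]
    simp [Bmap, kron, ite_mul, mul_ite, mul_sub, mul_add, Finset.sum_sub_distrib,
      Finset.sum_ite_eq, Finset.sum_ite_eq', Finset.mul_sum, mul_comm, mul_left_comm]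
    exact Finset.sum_congr rfl fun x _ => by ring
  have hS4 : ∀ e : Fin 8, ∑ p, ∑ q, Φ a b p q * (∑ r, H e r * Φ r p q c)
      = 6 * (kron b c * H e a) - 6 * (kron a c * H e b) - 4 * Bmap Φ H e a b c := by
    intro e
    have e3 : ∀ p q : Fin 8, Φ a b p q * (∑ r, H e r * Φ r p q c)
        = ∑ r, H e r * (Φ a b p q * Φ r c p q) := by
      intro p q
      rw [Finset.mul_sum]
      refine Finset.sum_congr rfl fun r _ => ?_
      have x1 := p34 hΦ r p q c
      have x2 := p23 hΦ r p c q
      have : Φ r p q c = Φ r c p q := by linarith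
      rw [this]; ring
    rw [Finset.sum_congr rfl fun p _ => Finset.sum_congr rfl fun q _ => e3 p q]
    rw [Finset.sum_congr rfl fun p _ => Finset.sum_comm, Finset.sum_comm]
    have e4 : ∀ r : Fin 8, ∑ p, ∑ q, H e r * (Φ a b p q * Φ r c p q)
        = H e r * (6 * (kron a r * kron b c) - 6 * (kron a c * kron b r) - 4 * Φ r a b c) := by
      intro r
      rw [show (∑ p, ∑ q, H e r * (Φ a b p q * Φ r c p q))
          = H e r * ∑ p, ∑ q, Φ a b p q * Φ r c p q by
        simp [Finset.mul_sum]]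
      rw [contract2 hΦ hC a b r c]
      have x1 := p23 hΦ a b r c
      have x2 := p12 hΦ a r b c
      have : Φ a b r c = Φ r a b c := by linarith
      rw [this]
    rw [Finset.sum_congr rfl fun r _ => e4 r]
    simp [Bmap, kron, ite_mul, mul_ite, mul_sub, mul_add, Finset.sum_sub_distrib,
      Finset.sum_ite_eq, Finset.sum_ite_eq', Finset.mul_sum, mul_comm, mul_left_comm]
    exact Finset.sum_congr rfl fun x _ => by ring
  rw [hS2, hS3 c, hS4 d, T1eval hΦ hC H a b c d]
  ring

lemma master (H : Fin 8 → Fin 8 → ℝ) (i j k l : Fin 8) :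
    J4 Φ (Kmap Φ H) i j k l
      = -3 * Kmap Φ H i j k l + 3 * Kmap Φ (fun x y => H y x) i j k l
        - 6 * (∑ x, H x x) * Φ i j k l := by
  have hKm : ∀ (G : Fin 8 → Fin 8 → ℝ) (i j k l : Fin 8),
      Kmap Φ G i j k l = Bmap Φ G i j k l - Bmap Φ G j i k l
        + Bmap Φ G k i j l - Bmap Φ G l i j k := by
    intro G i j k l
    unfold Kmap Bmap
    simp only [Finset.sum_add_distrib, Finset.sum_sub_distrib]
  have hAt : ∀ x y z w : Fin 8, Bmap Φ (fun x y => H y x) x y z w = Amap Φ H x y z w :=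
    fun _ _ _ _ => rfl
  unfold J4
  simp only [Finset.sum_add_distrib]
  rw [Teval hΦ hC H i j k l, Teval hΦ hC H k i j l, Teval hΦ hC H i l j k,
    Teval hΦ hC H k l i j, Teval hΦ hC H j l k i, Teval hΦ hC H j k i l]
  rw [hKm H i j k l, hKm (fun x y => H y x) i j k l]
  simp only [hAt]
  -- normalize Φ atoms
  rw [e_kijl hΦ i j k l, e_iljk hΦ i j k l, e_klij hΦ i j k l, e_jlki hΦ i j k l,
    e_jkil hΦ i j k l]
  -- normalize A atoms
  rw [A23 hΦ H i k j l, ← Ae1 hΦ H i j k l, ← Ae1 hΦ H k i j l, ← Ae1 hΦ H l i j k,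
    A24 hΦ H j l k i, ← Ae2 hΦ H l i j k, A23 hΦ H j k i l, A23 hΦ H k j i l]
  -- normalize B atoms
  rw [B23 hΦ H j k i l, ← Be1 hΦ H l i j k, B34 hΦ H j i l k, B34 hΦ H k i l j,
    ← Be2 hΦ H i j k l, ← Be2 hΦ H j i k l, ← Be2 hΦ H k i j l, B34 hΦ H i j l k,
    ← Be2 hΦ H l i j k]
  -- normalize M atoms
  rw [Mskew hΦ H k j, Mskew hΦ H l j, Mskew hΦ H l k, Mskew hΦ H l i,
    Mskew hΦ H j i, Mskew hΦ H k i]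
  -- normalize kron atoms
  rw [kron_comm k j, kron_comm l k, kron_comm l j, kron_comm k i, kron_comm l i,
    kron_comm j i]
  ring

end Aux


/-- (a) H symmetric tracefree ⟹ J₄(K(H)) = 0;
(b) H antisymmetric ⟹ J₄(K(H)) = −6 K(H); (c) J₄(K(δ)) = −12 K(δ). -/
theorem J4_on_K (Φ : Fin 8 → Fin 8 → Fin 8 → Fin 8 → ℝ)
    (hΦ : Alt4 Φ) (hCayley : Cayley Φ) :
    (∀ H : Fin 8 → Fin 8 → ℝ, (∀ i j, H i j = H j i) → (∑ p, H p p) = 0 →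
      ∀ i j k l, J4 Φ (Kmap Φ H) i j k l = 0) ∧
    (∀ H : Fin 8 → Fin 8 → ℝ, (∀ i j, H i j = -H j i) →
      ∀ i j k l, J4 Φ (Kmap Φ H) i j k l = -6 * Kmap Φ H i j k l) ∧
    (∀ i j k l, J4 Φ (Kmap Φ kron) i j k l = -12 * Kmap Φ kron i j k l) := by
  refine ⟨?_, ?_, ?_⟩
  · intro H hs ht i j k l
    rw [master hΦ hCayley H i j k l]
    have h1 : (fun x y => H y x) = H := by funext x y; exact hs y x
    rw [h1, ht]; ring
  · intro H ha i j k l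
    rw [master hΦ hCayley H i j k l]
    have h1 : (fun x y => H y x) = (fun x y => -H x y) := by
      funext x y; exact ha y x
    have h2 : Kmap Φ (fun x y => -H x y) i j k l = -Kmap Φ H i j k l := by
      unfold Kmap
      rw [← Finset.sum_neg_distrib]
      exact Finset.sum_congr rfl fun p _ => by ring
    have ht : (∑ x, H x x) = 0 :=
      Finset.sum_eq_zero fun x _ => by have := ha x x; linarith
    rw [h1, h2, ht]; ring
  · intro i j k l
    rw [master hΦ hCayley kron i j k l]
    have h1 : (fun x y => kron y x) = kron := by funext x y; exact kron_comm y x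
    have htr : (∑ x : Fin 8, kron x x) = (8 : ℝ) := by simp [kron]
    have hK : Kmap Φ kron i j k l = 4 * Φ i j k l := by
      unfold Kmap
      simp only [Finset.sum_sub_distrib, Finset.sum_add_distrib]
      simp [kron, ite_mul, Finset.sum_ite_eq, Finset.sum_ite_eq']
      rw [p12 hΦ j i k l, e_kijl hΦ i j k l, o_lijk hΦ i j k l]; ring
    rw [h1, hK, htr]; ring
end
end Spin7
end

section
/- The operator K restricted to 2-forms satisfies K ∘ π₂₁ = 0 and K ∘ π₇ = K; that is, for every 2-form β, K(π₂₁(β)) = 0 and K(π₇(β)) = K(β). Hence the image of the space of 2-forms under K equals the image of Λ²₇ under K (K(β) depends only on the Λ²₇ part of β). -/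
namespace Spin7

noncomputable section

variable {Φ : Fin 8 → Fin 8 → Fin 8 → Fin 8 → ℝ} {β : Fin 8 → Fin 8 → ℝ}

def Bq (Φ : Fin 8 → Fin 8 → Fin 8 → Fin 8 → ℝ) (β : Fin 8 → Fin 8 → ℝ) (y x z w : Fin 8) : ℝ :=
  ∑ p, β y p * Φ p x z w
def Sq (Φ : Fin 8 → Fin 8 → Fin 8 → Fin 8 → ℝ) (β : Fin 8 → Fin 8 → ℝ) (z w : Fin 8) : ℝ :=
  ∑ a, ∑ b, Φ a b z w * β a b

lemma contr (hΦ : Alt4 Φ) (hC : Cayley Φ) (x a b y z w : Fin 8) :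
    ∑ p, Φ x p a b * Φ p y z w =
      -(kron x y * kron a z * kron b w + kron x z * kron a w * kron b y
        + kron x w * kron a y * kron b z
      - kron x y * kron a w * kron b z - kron x w * kron a z * kron b y
      - kron x z * kron a y * kron b w
      - kron x y * Φ a b z w - kron a y * Φ b x z w - kron b y * Φ x a z w
      - kron x z * Φ a b w y - kron a z * Φ b x w y - kron b z * Φ x a w y
      - kron x w * Φ a b y z - kron a w * Φ b x y z - kron b w * Φ x a y z) := by
  have h : ∀ p, Φ x p a b * Φ p y z w = -(Φ x a b p * Φ y z w p) := by
    intro p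
    have e1 : Φ x p a b = Φ x a b p := by
      rw [(hΦ x p a b).2.1, (hΦ x a p b).2.2]; ring
    have e2 : Φ p y z w = -Φ y z w p := by
      rw [(hΦ p y z w).1, (hΦ y p z w).2.1, (hΦ y z p w).2.2]; ring
    rw [e1, e2]; ring
  rw [Finset.sum_congr rfl (fun p _ => h p), Finset.sum_neg_distrib, hC x a b y z w]

lemma hD (c : ℝ) (u v : Fin 8) : ∑ a, ∑ b, c * kron a u * kron b v * β a b = c * β u v := by
  simp [kron, ite_mul, mul_ite, Finset.sum_ite_eq']

lemma hS (c : ℝ) (u v : Fin 8) : ∑ a, ∑ b, c * Φ a b u v * β a b = c * Sq Φ β u v := by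
  rw [Sq, Finset.mul_sum]
  exact Finset.sum_congr rfl fun a _ => by
    rw [Finset.mul_sum]; exact Finset.sum_congr rfl fun b _ => by ring

lemma hB1 (u v s t : Fin 8) : ∑ a, ∑ b, kron a u * Φ b v s t * β a b = Bq Φ β u v s t := by
  simp [kron, ite_mul, Bq, Finset.sum_ite_eq', mul_comm]

lemma hB2 (hΦ : Alt4 Φ) (hβ : Alt2 β) (u v s t : Fin 8) :
    ∑ a, ∑ b, kron b u * Φ v a s t * β a b = Bq Φ β u v s t := by
  rw [Finset.sum_comm]
  have h1 : ∀ b, ∑ a, kron b u * Φ v a s t * β a b = kron b u * ∑ a, Φ v a s t * β a b := by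
    intro b; rw [Finset.mul_sum]; exact Finset.sum_congr rfl fun a _ => by ring
  rw [Finset.sum_congr rfl fun b _ => h1 b]
  simp only [kron, ite_mul, one_mul, zero_mul, Finset.sum_ite_eq', Finset.mem_univ, if_true]
  rw [Bq]
  exact Finset.sum_congr rfl fun a _ => by rw [(hΦ v a s t).1, hβ a u]; ring

lemma core (hΦ : Alt4 Φ) (hC : Cayley Φ) (hβ : Alt2 β) (x y z w : Fin 8) :
    ∑ a, ∑ b, β a b * (∑ p, Φ x p a b * Φ p y z w) =
      -(2 * kron x y * β z w) - 2 * kron x z * β w y - 2 * kron x w * β y z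
      + kron x y * Sq Φ β z w + kron x z * Sq Φ β w y + kron x w * Sq Φ β y z
      + 2 * Bq Φ β y x z w + 2 * Bq Φ β z x w y + 2 * Bq Φ β w x y z := by
  have e : ∀ a b, β a b * (∑ p, Φ x p a b * Φ p y z w) =
      kron x y * Φ a b z w * β a b + kron a y * Φ b x z w * β a b + kron b y * Φ x a z w * β a b
      + kron x z * Φ a b w y * β a b + kron a z * Φ b x w y * β a b + kron b z * Φ x a w y * β a b
      + kron x w * Φ a b y z * β a b + kron a w * Φ b x y z * β a b + kron b w * Φ x a y z * β a b
      + kron x y * kron a w * kron b z * β a b + kron x w * kron a z * kron b y * β a b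
      + kron x z * kron a y * kron b w * β a b
      - kron x y * kron a z * kron b w * β a b - kron x z * kron a w * kron b y * β a b
      - kron x w * kron a y * kron b z * β a b := by
    intro a b; rw [contr hΦ hC x a b y z w]; ring
  rw [Finset.sum_congr rfl fun a _ => Finset.sum_congr rfl fun b _ => e a b]
  simp only [Finset.sum_add_distrib, Finset.sum_sub_distrib]
  rw [hS (kron x y) z w, hB1 y x z w, hB2 hΦ hβ y x z w,
      hS (kron x z) w y, hB1 z x w y, hB2 hΦ hβ z x w y,
      hS (kron x w) y z, hB1 w x y z, hB2 hΦ hβ w x y z,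
      hD (kron x y) w z, hD (kron x w) z y, hD (kron x z) y w,
      hD (kron x y) z w, hD (kron x z) w y, hD (kron x w) y z]
  linear_combination kron x y * hβ w z + kron x w * hβ z y + kron x z * hβ y w

lemma Bq_swap34 (hΦ : Alt4 Φ) (y x z w : Fin 8) : Bq Φ β y x z w = -Bq Φ β y x w z := by
  rw [Bq, Bq, ← Finset.sum_neg_distrib]
  exact Finset.sum_congr rfl fun p _ => by rw [(hΦ p x z w).2.2]; ring

lemma Bq_swap23 (hΦ : Alt4 Φ) (y x z w : Fin 8) : Bq Φ β y x z w = -Bq Φ β y z x w := by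
  rw [Bq, Bq, ← Finset.sum_neg_distrib]
  exact Finset.sum_congr rfl fun p _ => by rw [(hΦ p x z w).2.1]; ring

lemma Sq_antisymm (hΦ : Alt4 Φ) (z w : Fin 8) : Sq Φ β z w = -Sq Φ β w z := by
  rw [Sq, Sq, ← Finset.sum_neg_distrib]
  refine Finset.sum_congr rfl fun a _ => ?_
  rw [← Finset.sum_neg_distrib]
  exact Finset.sum_congr rfl fun b _ => by rw [(hΦ a b z w).2.2]; ring

lemma kron_symm (i j : Fin 8) : kron i j = kron j i := by simp [kron, eq_comm]

lemma KmapB (i j k l : Fin 8) : Kmap Φ β i j k l =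
    Bq Φ β i j k l - Bq Φ β j i k l + Bq Φ β k i j l - Bq Φ β l i j k := by
  simp only [Kmap, Bq, Fin.sum_univ_eight]; ring

lemma KJ2 (hΦ : Alt4 Φ) (hC : Cayley Φ) (hβ : Alt2 β) (i j k l : Fin 8) :
    Kmap Φ (J2 Φ β) i j k l = -3 * Kmap Φ β i j k l := by
  have step1 : Kmap Φ (J2 Φ β) i j k l =
      ∑ p, ∑ a, ∑ b, (1/2 : ℝ) * β a b *
        (Φ i p a b * Φ p j k l - Φ j p a b * Φ p i k l
          + Φ k p a b * Φ p i j l - Φ l p a b * Φ p i j k) := by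
    rw [Kmap]
    exact Finset.sum_congr rfl fun p _ => by simp only [J2, Fin.sum_univ_eight]; ring
  rw [step1, Finset.sum_comm]
  have swap2 : (∑ a : Fin 8, ∑ p : Fin 8, ∑ b : Fin 8, (1/2 : ℝ) * β a b *
        (Φ i p a b * Φ p j k l - Φ j p a b * Φ p i k l
          + Φ k p a b * Φ p i j l - Φ l p a b * Φ p i j k)) =
      ∑ a : Fin 8, ∑ b : Fin 8, ∑ p : Fin 8, (1/2 : ℝ) * β a b *
        (Φ i p a b * Φ p j k l - Φ j p a b * Φ p i k l
          + Φ k p a b * Φ p i j l - Φ l p a b * Φ p i j k) :=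
    Finset.sum_congr rfl fun a _ => Finset.sum_comm
  rw [swap2]
  have step2 : ∀ a b : Fin 8, (∑ p, (1/2 : ℝ) * β a b *
        (Φ i p a b * Φ p j k l - Φ j p a b * Φ p i k l
          + Φ k p a b * Φ p i j l - Φ l p a b * Φ p i j k)) =
      (1/2 : ℝ) * (β a b * (∑ p, Φ i p a b * Φ p j k l)
        - β a b * (∑ p, Φ j p a b * Φ p i k l)
        + β a b * (∑ p, Φ k p a b * Φ p i j l)
        - β a b * (∑ p, Φ l p a b * Φ p i j k)) := by
    intro a b; simp only [Fin.sum_univ_eight]; ring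
  rw [Finset.sum_congr rfl fun a _ => Finset.sum_congr rfl fun b _ => step2 a b]
  have split : (∑ a, ∑ b, (1/2 : ℝ) * (β a b * (∑ p, Φ i p a b * Φ p j k l)
        - β a b * (∑ p, Φ j p a b * Φ p i k l)
        + β a b * (∑ p, Φ k p a b * Φ p i j l)
        - β a b * (∑ p, Φ l p a b * Φ p i j k))) =
      (1/2 : ℝ) * ((∑ a, ∑ b, β a b * (∑ p, Φ i p a b * Φ p j k l))
        - (∑ a, ∑ b, β a b * (∑ p, Φ j p a b * Φ p i k l))
        + (∑ a, ∑ b, β a b * (∑ p, Φ k p a b * Φ p i j l))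
        - (∑ a, ∑ b, β a b * (∑ p, Φ l p a b * Φ p i j k))) := by
    simp only [mul_sub, mul_add, Finset.sum_sub_distrib, Finset.sum_add_distrib,
      ← Finset.mul_sum]
  rw [split, core hΦ hC hβ i j k l, core hΦ hC hβ j i k l,
    core hΦ hC hβ k i j l, core hΦ hC hβ l i j k, KmapB]
  rw [show Bq Φ β k i l j = -Bq Φ β k i j l from by rw [Bq_swap34 hΦ k i l j],
    show Bq Φ β k j l i = Bq Φ β k i j l from by
      rw [Bq_swap34 hΦ k j l i, Bq_swap23 hΦ k j i l]; ring,
    show Bq Φ β l j i k = -Bq Φ β l i j k from by rw [Bq_swap23 hΦ l j i k],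
    show Bq Φ β i k j l = -Bq Φ β i j k l from by rw [Bq_swap23 hΦ i k j l],
    show Bq Φ β j k l i = Bq Φ β j i k l from by
      rw [Bq_swap34 hΦ j k l i, Bq_swap23 hΦ j k i l]; ring,
    show Bq Φ β l k i j = Bq Φ β l i j k from by
      rw [Bq_swap23 hΦ l k i j, Bq_swap34 hΦ l i k j]; ring,
    show Bq Φ β i l j k = Bq Φ β i j k l from by
      rw [Bq_swap23 hΦ i l j k, Bq_swap34 hΦ i j l k]; ring,
    show Bq Φ β j l k i = -Bq Φ β j i k l from by
      rw [Bq_swap34 hΦ j l k i, Bq_swap23 hΦ j l i k, Bq_swap34 hΦ j i l k]; ring,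
    show Bq Φ β k l i j = Bq Φ β k i j l from by
      rw [Bq_swap23 hΦ k l i j, Bq_swap34 hΦ k i l j]; ring,
    kron_symm j i, kron_symm k i, kron_symm k j, kron_symm l i, kron_symm l j, kron_symm l k]
  linear_combination (-(kron i k)) * hβ l j + (kron j l) * hβ k i
    + ((1:ℝ)/2) * (kron i k) * Sq_antisymm hΦ (β := β) l j
    - ((1:ℝ)/2) * (kron j l) * Sq_antisymm hΦ (β := β) i k

/-- `K ∘ π₂₁ = 0` and `K ∘ π₇ = K` on 2-forms. -/
theorem K_pi21_pi7 (Φ : Fin 8 → Fin 8 → Fin 8 → Fin 8 → ℝ)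
    (hΦ : Alt4 Φ) (hCayley : Cayley Φ) :
    ∀ β : Fin 8 → Fin 8 → ℝ, Alt2 β → ∀ i j k l,
      Kmap Φ (pi21 Φ β) i j k l = 0 ∧
      Kmap Φ (pi7 Φ β) i j k l = Kmap Φ β i j k l := by
  intro β hβ i j k l
  have h21 : Kmap Φ (pi21 Φ β) i j k l =
      (1/4 : ℝ) * (3 * Kmap Φ β i j k l + Kmap Φ (J2 Φ β) i j k l) := by
    simp only [Kmap, pi21, Fin.sum_univ_eight]; ring
  have h7 : Kmap Φ (pi7 Φ β) i j k l =
      (1/4 : ℝ) * (Kmap Φ β i j k l - Kmap Φ (J2 Φ β) i j k l) := by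
    simp only [Kmap, pi7, Fin.sum_univ_eight]; ring
  refine ⟨?_, ?_⟩
  · rw [h21, KJ2 hΦ hCayley hβ]; ring
  · rw [h7, KJ2 hΦ hCayley hβ]; ring
end
end Spin7
end

section
/- Let Ψ be a 4-index tensor on ℝ⁸ satisfying: Ψ_{abcd} is antisymmetric in a,b and in c,d, symmetric under the pair exchange (ab)↔(cd), trace-free (Ψ_{abab} = 0, summed over a,b), and Λ²₇-valued in each index pair (½ Φ_{ab}{}^{pq} Ψ_{pqcd} = −3 Ψ_{abcd} and ½ Φ_{cd}{}^{pq} Ψ_{abpq} = −3 Ψ_{abcd}). Define the 4-form (ΨΦ)_{abcd} = Ψ_{[ab}{}^{pq} Φ_{cd]pq}, where [⋯] denotes antisymmetrization with weight 1/4! over a,b,c,d. Then (ΨΦ) lies in Λ⁴₂₇; in particular its projection onto Λ⁴₁ ⊕ Λ⁴₇ ⊕ Λ⁴₃₅ vanishes: (ΨΦ)_{ipqr} Φ_{apqr} = 0 for all i,a (sum over p,q,r). -/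
/-!
The `Λ²₇` condition gives `Ψ_{ab}{}^{st} Φ_{cdst} = -6 Ψ_{abcd}`, so `ΨΦ = -6 Ψ_{[abcd]}`; for a
tensor with the symmetries of `Ψ` the total antisymmetrisation is a third of the cyclic sum over
the last three indices, and contracting with `Φ_{apqr}` gives
`(ΨΦ)_{ipqr} Φ_{apqr} = -6 Ψ_{ipqr} Φ_{apqr}`.

Everything is then reduced to the Ricci contraction `R_{ia} = Ψ_{ipap}`. Contracting `Ψ_{ipst}`
against the doubly contracted Cayley identity
`Φ_{stqr} Φ_{apqr} = 6 (δ_{sa} δ_{tp} - δ_{sp} δ_{ta}) - 4 Φ_{stap}` gives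
`Ψ_{ipqr} Φ_{apqr} = -6 R_{ia}`. Finally `Ψ_{stuv} Φ_{stip} Φ_{uvap}` equals `36 R_{ia}` by the
`Λ²₇` condition on both pairs, and `-28 R_{ia}` by the full Cayley identity and trace-freeness;
hence `R = 0`.
-/

namespace Spin7

noncomputable section

lemma sum_comm_rotate {ι M : Type*} [Fintype ι] [AddCommMonoid M] (f : ι → ι → ι → M) :
    ∑ x, ∑ y, ∑ z, f x y z = ∑ y, ∑ z, ∑ x, f x y z := by
  rw [Finset.sum_comm]
  exact Finset.sum_congr rfl fun y _ => Finset.sum_comm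

lemma sum_comm_pairs {ι M : Type*} [Fintype ι] [AddCommMonoid M] (f : ι → ι → ι → ι → M) :
    ∑ w, ∑ x, ∑ y, ∑ z, f w x y z = ∑ y, ∑ z, ∑ w, ∑ x, f w x y z :=
  (Finset.sum_congr rfl fun _ _ => sum_comm_rotate _).trans (sum_comm_rotate _)

lemma sum_sum_mul_eq_zero_of_symm_of_antisymm {ι : Type*} [Fintype ι] {W G : ι → ι → ℝ}
    (hW : ∀ x y, W x y = W y x) (hG : ∀ x y, G x y = -G y x) :
    ∑ x, ∑ y, W x y * G x y = 0 := by
  have h : ∑ x, ∑ y, W x y * G x y = -∑ x, ∑ y, W x y * G x y :=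
    calc ∑ x, ∑ y, W x y * G x y = ∑ y, ∑ x, W x y * G x y := Finset.sum_comm
      _ = ∑ y, ∑ x, -(W y x * G y x) := Finset.sum_congr rfl fun y _ =>
          Finset.sum_congr rfl fun x _ => by rw [hW, hG]; ring
      _ = _ := by simp only [Finset.sum_neg_distrib]
  linarith

lemma Alt3.cycle {ω : Fin 8 → Fin 8 → Fin 8 → ℝ} (hω : Alt3 ω) (i j k : Fin 8) :
    ω j k i = ω i j k := by
  linarith [(hω j k i).2, (hω j i k).1]

lemma sum_cycle_mul_of_alt3 {ω : Fin 8 → Fin 8 → Fin 8 → ℝ} (hω : Alt3 ω)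
    (σ : Fin 8 → Fin 8 → Fin 8 → ℝ) :
    ∑ p, ∑ q, ∑ r, (σ p q r + σ q r p + σ r p q) * ω p q r
      = 3 * ∑ p, ∑ q, ∑ r, σ p q r * ω p q r := by
  have h₁ : ∑ p, ∑ q, ∑ r, σ q r p * ω p q r = ∑ p, ∑ q, ∑ r, σ p q r * ω p q r := by
    rw [sum_comm_rotate]; simp only [hω.cycle]
  have h₂ : ∑ p, ∑ q, ∑ r, σ r p q * ω p q r = ∑ p, ∑ q, ∑ r, σ p q r * ω p q r := by
    rw [sum_comm_rotate, sum_comm_rotate]; simp only [hω.cycle]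
  simp only [add_mul, Finset.sum_add_distrib, h₁, h₂]
  ring

variable {Φ : Fin 8 → Fin 8 → Fin 8 → Fin 8 → ℝ}

namespace Alt4

variable (hΦ : Alt4 Φ) (i j k l : Fin 8)
include hΦ

lemma swap13 : Φ i j k l = -Φ k j i l := by
  linarith [(hΦ i j k l).1, (hΦ j i k l).2.1, (hΦ j k i l).1]

lemma swap24 : Φ i j k l = -Φ i l k j := by
  linarith [(hΦ i j k l).2.2, (hΦ i j l k).2.1, (hΦ i l j k).2.2]

lemma swap14 : Φ i j k l = -Φ l j k i := by
  linarith [hΦ.swap13 i j k l, (hΦ k j i l).2.2, hΦ.swap13 k j l i]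

lemma pair_swap : Φ i j k l = Φ k l i j := by
  linarith [hΦ.swap13 i j k l, hΦ.swap24 k j i l]

lemma apply_eq_zero_13 : Φ i j i l = 0 := by linarith [hΦ.swap13 i j i l]
lemma apply_eq_zero_14 : Φ i j k i = 0 := by linarith [hΦ.swap14 i j k i]
lemma apply_eq_zero_23 : Φ i j j l = 0 := by linarith [(hΦ i j j l).2.1]
lemma apply_eq_zero_24 : Φ i j k j = 0 := by linarith [hΦ.swap24 i j k j]

omit i j k l in
lemma alt3_apply (a : Fin 8) : Alt3 (Φ a) := fun j k l => ⟨(hΦ a j k l).2.1, (hΦ a j k l).2.2⟩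

end Alt4

lemma Cayley.sum_sum_mul (hΦ : Alt4 Φ) (hC : Cayley Φ) (i j a b : Fin 8) :
    ∑ k, ∑ p, Φ i j k p * Φ a b k p
      = 6 * (kron i a * kron j b - kron i b * kron j a) - 4 * Φ i j a b := by
  rw [Finset.sum_congr rfl fun k _ => hC i j k a b k]
  simp only [Finset.sum_add_distrib, Finset.sum_sub_distrib]
  simp only [kron, mul_ite, mul_one, mul_zero, ↓reduceIte, Finset.sum_ite_irrel, Finset.sum_const,
    Finset.card_univ, Fintype.card_fin, nsmul_eq_mul, Nat.cast_ofNat,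
    Finset.sum_ite_eq', Finset.mem_univ, hΦ.apply_eq_zero_24, sub_zero, hΦ.apply_eq_zero_14,
    ite_mul, one_mul, zero_mul, hΦ.apply_eq_zero_23, hΦ.apply_eq_zero_13, Finset.sum_ite_eq]
  rw [(hΦ i j b a).2.2, (hΦ j i a b).1]
  split_ifs <;> ring

lemma asym4_expand (g : Fin 8 → Fin 8 → Fin 8 → Fin 8 → ℝ) (i j k l : Fin 8) :
    asym4 g i j k l = (1/24 : ℝ) *
      (g i j k l - g i j l k - g i k j l + g i k l j + g i l j k - g i l k j
       - g j i k l + g j i l k + g j k i l - g j k l i - g j l i k + g j l k i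
       + g k i j l - g k i l j - g k j i l + g k j l i + g k l i j - g k l j i
       - g l i j k + g l i k j + g l j i k - g l j k i - g l k i j + g l k j i) := by
  rw [asym4]
  iterate 3
    rw [Finset.univ_perm_fin_succ]
    simp only [Finset.sum_map, Fintype.sum_prod_type, Equiv.toEmbedding_apply]
  simp only [show (3 : Fin 4) = Fin.succ 2 from rfl, show (2 : Fin 4) = Fin.succ 1 from rfl,
    show (1 : Fin 4) = Fin.succ 0 from rfl, show (2 : Fin 3) = Fin.succ 1 from rfl,
    show (1 : Fin 3) = Fin.succ 0 from rfl, show (1 : Fin 2) = Fin.succ 0 from rfl]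
  simp only [Fin.sum_univ_succ, Equiv.Perm.decomposeFin.symm_sign,
    Equiv.Perm.decomposeFin_symm_apply_zero, Equiv.Perm.decomposeFin_symm_apply_succ,
    Finset.univ_unique, Finset.sum_singleton, Equiv.swap_apply_def]
  norm_num [Fin.ext_iff]
  simp only [Matrix.cons_val]
  ring

lemma asym4_eq_of_symm {g : Fin 8 → Fin 8 → Fin 8 → Fin 8 → ℝ}
    (h₁ : ∀ a b c d, g a b c d = -g b a c d) (h₂ : ∀ a b c d, g a b c d = -g a b d c)
    (h₃ : ∀ a b c d, g a b c d = g c d a b) (i j k l : Fin 8) :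
    asym4 g i j k l = (g i j k l + g i k l j + g i l j k) / 3 := by
  have e₂ : ∀ x z w, g x i z w = -g i x z w := fun x z w => h₁ x i z w
  have e₃ : ∀ x y w, g x y i w = g i w x y := fun x y w => h₃ x y i w
  have e₄ : ∀ x y z, g x y z i = -g i z x y := fun x y z => by rw [h₃, h₁]
  rw [asym4_expand]
  simp only [e₂, e₃, e₄]
  linarith [h₂ i j k l, h₂ i k l j, h₂ i l j k]

/-- `Ψ ∈ S²(Λ²₇)`, where `Λ²₇` is the `-3`-eigenspace of `J₂`. -/
structure IsSymLambda27 (Φ Ψ : Fin 8 → Fin 8 → Fin 8 → Fin 8 → ℝ) : Prop where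
  antisymm_right : ∀ a b c d, Ψ a b c d = -Ψ a b d c
  pair_symm : ∀ a b c d, Ψ a b c d = Ψ c d a b
  J2_eq : ∀ a b c d, J2 Φ (Ψ a b) c d = -3 * Ψ a b c d

def ricci (Ψ : Fin 8 → Fin 8 → Fin 8 → Fin 8 → ℝ) (i a : Fin 8) : ℝ := ∑ p, Ψ i p a p

namespace IsSymLambda27

variable {Ψ : Fin 8 → Fin 8 → Fin 8 → Fin 8 → ℝ} (hΨ : IsSymLambda27 Φ Ψ)
include hΨ

lemma antisymm_left (a b c d : Fin 8) : Ψ a b c d = -Ψ b a c d := by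
  rw [hΨ.pair_symm, hΨ.antisymm_right, hΨ.pair_symm]

lemma sum_mul_phi_snd (a b c d : Fin 8) :
    ∑ p, ∑ q, Ψ a b p q * Φ c d p q = -6 * Ψ a b c d := by
  have h := hΨ.J2_eq a b c d
  simp only [J2, mul_comm (Φ _ _ _ _)] at h
  linarith

lemma sum_mul_phi_snd_fst (hΦ : Alt4 Φ) (a b c d : Fin 8) :
    ∑ p, ∑ q, Ψ a b p q * Φ p q c d = -6 * Ψ a b c d := by
  simp only [hΦ.pair_swap _ _ c d, hΨ.sum_mul_phi_snd]

lemma sum_mul_phi_fst (hΦ : Alt4 Φ) (a b c d : Fin 8) :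
    ∑ p, ∑ q, Ψ p q a b * Φ p q c d = -6 * Ψ a b c d := by
  rw [← hΨ.sum_mul_phi_snd]
  exact Finset.sum_congr rfl fun p _ => Finset.sum_congr rfl fun q _ => by
    rw [hΨ.pair_symm, hΦ.pair_swap]

lemma ricci_comm (i a : Fin 8) : ricci Ψ i a = ricci Ψ a i :=
  Finset.sum_congr rfl fun p _ => hΨ.pair_symm i p a p

lemma sum_apply_13 (i a : Fin 8) : ∑ p, Ψ p i p a = ricci Ψ i a :=
  Finset.sum_congr rfl fun p _ => by rw [hΨ.antisymm_left, hΨ.antisymm_right, neg_neg]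

lemma sum_apply_14 (i a : Fin 8) : ∑ p, Ψ p i a p = -ricci Ψ i a := by
  rw [ricci, ← Finset.sum_neg_distrib]
  exact Finset.sum_congr rfl fun p _ => hΨ.antisymm_left p i a p

lemma sum_apply_23 (i a : Fin 8) : ∑ p, Ψ i p p a = -ricci Ψ i a := by
  rw [ricci, ← Finset.sum_neg_distrib]
  exact Finset.sum_congr rfl fun p _ => hΨ.antisymm_right i p p a

lemma sum_ricci_mul_antisymm {G : Fin 8 → Fin 8 → ℝ} (hG : ∀ x y, G x y = -G y x) :
    ∑ x, ∑ y, ricci Ψ x y * G x y = 0 :=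
  sum_sum_mul_eq_zero_of_symm_of_antisymm hΨ.ricci_comm hG

lemma sum_sum_apply_swap : ∑ x, ∑ y, Ψ x y y x = -∑ x, ∑ y, Ψ x y x y := by
  simp only [← Finset.sum_neg_distrib, ← hΨ.antisymm_right]

lemma sum_mul_phi_self :
    ∑ x, ∑ y, ∑ z, ∑ w, Ψ x y z w * Φ x y z w = -6 * ∑ x, ∑ y, Ψ x y x y := by
  simp only [hΨ.sum_mul_phi_snd, ← Finset.mul_sum]

lemma sum_mul_phi_mul_phi_via_lambda27 (hΦ : Alt4 Φ) (i a : Fin 8) :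
    ∑ s, ∑ t, ∑ u, ∑ v, Ψ s t u v * ∑ p, Φ s t i p * Φ u v a p = 36 * ricci Ψ i a := by
  have h : ∀ s t, ∑ u, ∑ v, Ψ s t u v * ∑ p, Φ s t i p * Φ u v a p
      = -6 * ∑ p, Ψ s t a p * Φ s t i p := by
    intro s t
    simp only [Finset.mul_sum]
    rw [sum_comm_rotate, sum_comm_rotate]
    refine Finset.sum_congr rfl fun p _ => ?_
    simp only [mul_left_comm (Ψ _ _ _ _), ← Finset.mul_sum, hΨ.sum_mul_phi_snd_fst hΦ]
    ring
  simp only [h, ← Finset.mul_sum]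
  rw [sum_comm_rotate, sum_comm_rotate]
  simp only [hΨ.sum_mul_phi_fst hΦ, ← Finset.mul_sum, ← ricci.eq_1, hΨ.ricci_comm a]
  ring

lemma sum_mul_phi_mul_phi_via_cayley (hΦ : Alt4 Φ) (hC : Cayley Φ)
    (hTr : ∑ a, ∑ b, Ψ a b a b = 0) (i a : Fin 8) :
    ∑ s, ∑ t, ∑ u, ∑ v, Ψ s t u v * ∑ p, Φ s t i p * Φ u v a p = -28 * ricci Ψ i a := by
  -- A delta joining the two pairs of `Ψ` leaves a trace, or a (symmetric) Ricci contraction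
  -- against an antisymmetric slice of `Φ`: both vanish. A delta tying `Ψ` to `i` or `a` leaves
  -- `±ricci`, or `6 ricci` through `Λ²₇`.
  have z1 : ∑ x, ∑ y, ∑ z, Ψ x y x z * Φ y i z a = 0 := by
    rw [sum_comm_rotate]
    simp only [← Finset.sum_mul, hΨ.sum_apply_13,
      hΨ.sum_ricci_mul_antisymm fun y z => hΦ.swap13 y i z a]
  have z2 : ∑ x, ∑ y, ∑ z, Ψ x y y z * Φ i x z a = 0 := by
    simp only [Finset.sum_comm (γ := Fin 8) (f := fun y z => Ψ _ y y z * Φ i _ z a),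
      ← Finset.sum_mul, hΨ.sum_apply_23, neg_mul, Finset.sum_neg_distrib,
      hΨ.sum_ricci_mul_antisymm fun x z => (hΦ i x z a).2.1, neg_zero]
  have z3 : ∑ x, ∑ y, ∑ z, Ψ x y z x * Φ y i a z = 0 := by
    rw [sum_comm_rotate]
    simp only [← Finset.sum_mul, hΨ.sum_apply_14, neg_mul, Finset.sum_neg_distrib,
      hΨ.sum_ricci_mul_antisymm fun y z => hΦ.swap14 y i a z, neg_zero]
  have z4 : ∑ x, ∑ y, ∑ z, Ψ x y z y * Φ i x a z = 0 := by
    simp only [Finset.sum_comm (γ := Fin 8) (f := fun y z => Ψ _ y z y * Φ i _ a z),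
      ← Finset.sum_mul, ← ricci.eq_1, hΨ.sum_ricci_mul_antisymm fun x z => hΦ.swap24 i x a z]
  have l1 : ∑ x, ∑ y, ∑ z, Ψ x y i z * Φ x y z a = 6 * ricci Ψ i a := by
    rw [sum_comm_rotate, sum_comm_rotate]
    simp only [hΨ.sum_mul_phi_fst hΦ, hΨ.antisymm_right i _ _ a, ricci, Finset.mul_sum, mul_neg,
      neg_mul, neg_neg]
  have l2 : ∑ x, ∑ y, ∑ z, Ψ x y z i * Φ x y a z = 6 * ricci Ψ i a := by
    rw [sum_comm_rotate, sum_comm_rotate]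
    simp only [hΨ.sum_mul_phi_fst hΦ, ← Finset.mul_sum, hΨ.sum_apply_14]
    ring
  have l3 : ∑ x, ∑ y, ∑ z, Ψ a x y z * Φ x i y z = 6 * ricci Ψ i a := by
    simp only [hΨ.sum_mul_phi_snd, ← Finset.mul_sum, hΨ.sum_apply_23, hΨ.ricci_comm a]
    ring
  have l4 : ∑ x, ∑ y, ∑ z, Ψ x a y z * Φ i x y z = 6 * ricci Ψ i a := by
    simp only [hΨ.sum_mul_phi_snd, ← Finset.mul_sum, hΨ.sum_apply_14, hΨ.ricci_comm a]
    ring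
  unfold Cayley at hC
  simp only [hC, mul_add, mul_sub, Finset.sum_add_distrib, Finset.sum_sub_distrib]
  simp only [kron, mul_ite, mul_one, mul_zero, Finset.sum_ite_irrel, Finset.sum_ite_eq,
    Finset.mem_univ, ↓reduceIte, Finset.sum_const_zero, Finset.sum_ite_eq', ite_mul, one_mul,
    zero_mul, neg_mul]
  rw [z1, z2, z3, z4, l1, l2, l3, l4, hΨ.sum_sum_apply_swap, hΨ.sum_mul_phi_self, hTr,
    hΨ.sum_apply_14, hΨ.sum_apply_23, hΨ.sum_apply_13, ← ricci.eq_1, hΨ.ricci_comm a]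
  split_ifs <;> ring

lemma ricci_eq_zero (hΦ : Alt4 Φ) (hC : Cayley Φ) (hTr : ∑ a, ∑ b, Ψ a b a b = 0)
    (i a : Fin 8) :
    ricci Ψ i a = 0 := by
  linarith [hΨ.sum_mul_phi_mul_phi_via_lambda27 hΦ i a,
    hΨ.sum_mul_phi_mul_phi_via_cayley hΦ hC hTr i a]

lemma sum_mul_phi_eq_ricci (hΦ : Alt4 Φ) (hC : Cayley Φ) (i a : Fin 8) :
    ∑ p, ∑ q, ∑ r, Ψ i p q r * Φ a p q r = -6 * ricci Ψ i a := by
  have hA : ∑ p, ∑ s, ∑ t, Ψ i p s t * ∑ q, ∑ r, Φ s t q r * Φ a p q r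
      = -6 * ∑ p, ∑ q, ∑ r, Ψ i p q r * Φ a p q r := by
    simp only [Finset.mul_sum]
    refine Finset.sum_congr rfl fun p _ => ?_
    rw [sum_comm_pairs]
    refine Finset.sum_congr rfl fun q _ => Finset.sum_congr rfl fun r _ => ?_
    simp only [← mul_assoc, ← Finset.sum_mul, hΨ.sum_mul_phi_snd_fst hΦ]
  have hB : ∑ p, ∑ s, ∑ t, Ψ i p s t * ∑ q, ∑ r, Φ s t q r * Φ a p q r
      = 36 * ricci Ψ i a := by
    simp only [hC.sum_sum_mul hΦ, mul_sub, Finset.sum_sub_distrib]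
    simp only [kron, mul_ite, mul_one, mul_zero, Finset.sum_ite_eq', Finset.mem_univ, ↓reduceIte]
    simp only [← Finset.sum_mul, mul_left_comm (Ψ _ _ _ _), ← Finset.mul_sum,
      hΨ.sum_mul_phi_snd_fst hΦ, hΨ.sum_apply_23, ← ricci.eq_1]
    ring
  linarith

end IsSymLambda27

theorem PsiPhi_in_27_general (Φ : Fin 8 → Fin 8 → Fin 8 → Fin 8 → ℝ)
    (hΦ : Alt4 Φ) (hCayley : Cayley Φ)
    (Ψ : Fin 8 → Fin 8 → Fin 8 → Fin 8 → ℝ)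
    (hA2 : ∀ a b c d, Ψ a b c d = -Ψ a b d c)
    (hS : ∀ a b c d, Ψ a b c d = Ψ c d a b)
    (hTr : (∑ a, ∑ b, Ψ a b a b) = 0)
    (h7R : ∀ a b c d, (1/2 : ℝ) * (∑ p, ∑ q, Φ c d p q * Ψ a b p q) = -3 * Ψ a b c d) :
    ∀ i a : Fin 8,
      (∑ p, ∑ q, ∑ r,
        asym4 (fun a' b' c' d' => ∑ s, ∑ t, Ψ a' b' s t * Φ c' d' s t) i p q r
          * Φ a p q r) = 0 := by
  intro i a
  have hΨ : IsSymLambda27 Φ Ψ := ⟨hA2, hS, h7R⟩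
  have hΨΦ : (fun a b c d => ∑ s, ∑ t, Ψ a b s t * Φ c d s t) = fun a b c d => -6 * Ψ a b c d := by
    ext a b c d
    exact hΨ.sum_mul_phi_snd a b c d
  have hasym : ∀ p q r, asym4 (fun a b c d => -6 * Ψ a b c d) i p q r
      = -2 * (Ψ i p q r + Ψ i q r p + Ψ i r p q) := by
    intro p q r
    rw [asym4_eq_of_symm (fun a b c d => by rw [hΨ.antisymm_left]; ring)
      (fun a b c d => by rw [hA2]; ring) (fun a b c d => by rw [hS])]
    ring
  simp only [hΨΦ, hasym, mul_assoc, ← Finset.mul_sum]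
  rw [sum_cycle_mul_of_alt3 (hΦ.alt3_apply a), hΨ.sum_mul_phi_eq_ricci hΦ hCayley,
    hΨ.ricci_eq_zero hΦ hCayley hTr]
  ring

/-- if Ψ ∈ Λ²₇ ⊗_S Λ²₇ is tracefree, then the 4-form
`(ΨΦ)_{abcd} = Ψ_{[ab}{}^{pq} Φ_{cd]pq}` lies in Λ⁴₂₇; in particular its projection
onto Λ⁴₁ ⊕ Λ⁴₇ ⊕ Λ⁴₃₅ vanishes: `(ΨΦ)_{ipqr} Φ_{apqr} = 0`. -/
theorem PsiPhi_in_27 (Φ : Fin 8 → Fin 8 → Fin 8 → Fin 8 → ℝ)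
    (hΦ : Alt4 Φ) (hCayley : Cayley Φ)
    (Ψ : Fin 8 → Fin 8 → Fin 8 → Fin 8 → ℝ)
    (hA1 : ∀ a b c d, Ψ a b c d = -Ψ b a c d)
    (hA2 : ∀ a b c d, Ψ a b c d = -Ψ a b d c)
    (hS : ∀ a b c d, Ψ a b c d = Ψ c d a b)
    (hTr : (∑ a, ∑ b, Ψ a b a b) = 0)
    (h7L : ∀ a b c d, (1/2 : ℝ) * (∑ p, ∑ q, Φ a b p q * Ψ p q c d) = -3 * Ψ a b c d)
    (h7R : ∀ a b c d, (1/2 : ℝ) * (∑ p, ∑ q, Φ c d p q * Ψ a b p q) = -3 * Ψ a b c d) :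
    ∀ i a : Fin 8,
      (∑ p, ∑ q, ∑ r,
        asym4 (fun a' b' c' d' => ∑ s, ∑ t, Ψ a' b' s t * Φ c' d' s t) i p q r
          * Φ a p q r) = 0 :=
  PsiPhi_in_27_general Φ hΦ hCayley Ψ hA2 hS hTr h7R

end

end Spin7
end

section
/- Let ξ be a 2-form lying in Λ²₇, i.e. ½ Φ_{abpq} ξ_{pq} = −3 ξ_{ab} for all a,b. Then for all b,c: ξ_{ba} ξ_{ca} = (1/8) δ_{bc} (ξ_{pq} ξ_{pq}) (sums over a, respectively p,q). -/
namespace Spin7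

noncomputable section

theorem aux_sum5_swap (F : Fin 8 → Fin 8 → Fin 8 → Fin 8 → Fin 8 → ℝ) :
    (∑ a, ∑ p, ∑ q, ∑ r, ∑ s, F a p q r s) = ∑ p, ∑ q, ∑ r, ∑ s, ∑ a, F a p q r s := by
  rw [Finset.sum_comm]
  refine Finset.sum_congr rfl fun p _ => ?_
  rw [Finset.sum_comm]
  refine Finset.sum_congr rfl fun q _ => ?_
  rw [Finset.sum_comm]
  refine Finset.sum_congr rfl fun r _ => ?_
  rw [Finset.sum_comm]

theorem aux_rot3 (f : Fin 8 → Fin 8 → Fin 8 → ℝ) :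
    (∑ p, ∑ q, ∑ s, f p q s) = ∑ s, ∑ p, ∑ q, f p q s := by
  rw [show (∑ p, ∑ q, ∑ s, f p q s) = ∑ p, ∑ s, ∑ q, f p q s from
    Finset.sum_congr rfl fun p _ => Finset.sum_comm]
  exact Finset.sum_comm

theorem aux_swap22 (f : Fin 8 → Fin 8 → Fin 8 → Fin 8 → ℝ) :
    (∑ p, ∑ q, ∑ r, ∑ s, f p q r s) = ∑ r, ∑ s, ∑ p, ∑ q, f p q r s := by
  rw [aux_rot3 (fun p q r => ∑ s, f p q r s)]
  exact Finset.sum_congr rfl fun r _ => aux_rot3 (fun p q s => f p q r s)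

theorem aux_sum_antisym (f : Fin 8 → Fin 8 → ℝ) (h : ∀ q r, f q r = -f r q) :
    (∑ q, ∑ r, f q r) = 0 := by
  have h2 : (∑ q, ∑ r, f q r) = -(∑ q, ∑ r, f q r) := by
    calc (∑ q, ∑ r, f q r) = ∑ r, ∑ q, f q r := Finset.sum_comm
      _ = ∑ r, ∑ q, -(f r q) :=
          Finset.sum_congr rfl fun r _ => Finset.sum_congr rfl fun q _ => h q r
      _ = -(∑ q, ∑ r, f q r) := by simp [Finset.sum_neg_distrib]
  linarith

/-- for ξ ∈ Λ²₇, `ξ_{ba} ξ_{ca} = (1/8) δ_{bc} (ξ_{pq} ξ_{pq})`. -/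
theorem xi_squared (Φ : Fin 8 → Fin 8 → Fin 8 → Fin 8 → ℝ)
    (hΦ : Alt4 Φ) (hCayley : Cayley Φ)
    (ξ : Fin 8 → Fin 8 → ℝ) (hξ : Alt2 ξ)
    (h7 : ∀ a b, (1/2 : ℝ) * (∑ p, ∑ q, Φ a b p q * ξ p q) = -3 * ξ a b) :
    ∀ b c : Fin 8,
      (∑ a, ξ b a * ξ c a) = (1/8 : ℝ) * kron b c * (∑ p, ∑ q, ξ p q * ξ p q) := by
  intro b c
  have hA : ∀ i j, ξ i j = -ξ j i := hξ
  have hc : ∀ a b, (∑ p, ∑ q, Φ a b p q * ξ p q) = -6 * ξ a b := by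
    intro a b; have := h7 a b; linarith
  have hsw13 : ∀ i j k l, Φ i j k l = -Φ k j i l := by
    intro i j k l; rw [(hΦ i j k l).1, (hΦ j i k l).2.1, (hΦ j k i l).1]; ring
  have hsw24 : ∀ i j k l, Φ i j k l = -Φ i l k j := by
    intro i j k l; rw [(hΦ i j k l).2.1, (hΦ i k j l).2.2, (hΦ i k l j).2.1]; ring
  have hsw14 : ∀ i j k l, Φ i j k l = -Φ l j k i := by
    intro i j k l; rw [hsw13 i j k l, (hΦ k j i l).2.2, hsw13 k j l i]; ring
  have hpair : ∀ i j k l, Φ i j k l = Φ k l i j := by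
    intro i j k l; rw [hsw13 i j k l, hsw24 k j i l]; ring
  have step1 : 36 * (∑ a, ξ b a * ξ c a)
      = ∑ a, (∑ p, ∑ q, Φ b a p q * ξ p q) * (∑ r, ∑ s, Φ c a r s * ξ r s) := by
    rw [Finset.mul_sum]
    exact Finset.sum_congr rfl fun a _ => by rw [hc b a, hc c a]; ring
  have step2 : (∑ a, (∑ p, ∑ q, Φ b a p q * ξ p q) * (∑ r, ∑ s, Φ c a r s * ξ r s))
      = ∑ p, ∑ q, ∑ r, ∑ s, ξ p q * ξ r s * (∑ a, Φ b r s a * Φ c p q a) := by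
    calc (∑ a, (∑ p, ∑ q, Φ b a p q * ξ p q) * (∑ r, ∑ s, Φ c a r s * ξ r s))
        = ∑ a, ∑ p, ∑ q, ∑ r, ∑ s, Φ b a r s * ξ r s * (Φ c a p q * ξ p q) := by
          refine Finset.sum_congr rfl fun a _ => ?_
          simp only [Finset.sum_mul, Finset.mul_sum]
      _ = ∑ p, ∑ q, ∑ r, ∑ s, ∑ a, Φ b a r s * ξ r s * (Φ c a p q * ξ p q) :=
          aux_sum5_swap _
      _ = ∑ p, ∑ q, ∑ r, ∑ s, ξ p q * ξ r s * (∑ a, Φ b r s a * Φ c p q a) := by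
          refine Finset.sum_congr rfl fun p _ => Finset.sum_congr rfl fun q _ =>
            Finset.sum_congr rfl fun r _ => Finset.sum_congr rfl fun s _ => ?_
          rw [Finset.mul_sum]
          refine Finset.sum_congr rfl fun a _ => ?_
          rw [show Φ b a r s = Φ b r s a from by
                rw [(hΦ b a r s).2.1, (hΦ b r a s).2.2]; ring,
              show Φ c a p q = Φ c p q a from by
                rw [(hΦ c a p q).2.1, (hΦ c p a q).2.2]; ring]
          ring
  have hT1 : (∑ p, ∑ q, ∑ r, ∑ s, ξ p q * ξ r s * (kron b c * kron r p * kron s q))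
      = kron b c * (∑ p, ∑ q, ξ p q * ξ p q) := by
    simp only [kron, mul_ite, ite_mul, mul_one, one_mul, mul_zero, zero_mul,
      Finset.sum_ite_eq, Finset.sum_ite_eq', Finset.mem_univ, if_true, Finset.sum_ite_irrel,
      Finset.sum_const_zero]
  have hT2 : (∑ p, ∑ q, ∑ r, ∑ s, ξ p q * ξ r s * (kron b p * kron r q * kron s c))
      = -(∑ a, ξ b a * ξ c a) := by
    simp only [kron, mul_ite, ite_mul, mul_one, one_mul, mul_zero, zero_mul,
      Finset.sum_ite_eq, Finset.sum_ite_eq', Finset.mem_univ, if_true, Finset.sum_ite_irrel,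
      Finset.sum_const_zero]
    rw [← Finset.sum_neg_distrib]
    exact Finset.sum_congr rfl fun x _ => by rw [hA x c]; ring
  have hT3 : (∑ p, ∑ q, ∑ r, ∑ s, ξ p q * ξ r s * (kron b q * kron r c * kron s p))
      = -(∑ a, ξ b a * ξ c a) := by
    simp only [kron, mul_ite, ite_mul, mul_one, one_mul, mul_zero, zero_mul,
      Finset.sum_ite_eq, Finset.sum_ite_eq', Finset.mem_univ, if_true, Finset.sum_ite_irrel,
      Finset.sum_const_zero]
    rw [← Finset.sum_neg_distrib]
    exact Finset.sum_congr rfl fun x _ => by rw [hA x b]; ring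
  have hT4 : (∑ p, ∑ q, ∑ r, ∑ s, ξ p q * ξ r s * (kron b c * kron r q * kron s p))
      = kron b c * (∑ p, ∑ q, ξ p q * ξ q p) := by
    simp only [kron, mul_ite, ite_mul, mul_one, one_mul, mul_zero, zero_mul,
      Finset.sum_ite_eq, Finset.sum_ite_eq', Finset.mem_univ, if_true, Finset.sum_ite_irrel,
      Finset.sum_const_zero]
  have hT5 : (∑ p, ∑ q, ∑ r, ∑ s, ξ p q * ξ r s * (kron b q * kron r p * kron s c))
      = (∑ a, ξ b a * ξ c a) := by
    simp only [kron, mul_ite, ite_mul, mul_one, one_mul, mul_zero, zero_mul,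
      Finset.sum_ite_eq, Finset.sum_ite_eq', Finset.mem_univ, if_true, Finset.sum_ite_irrel,
      Finset.sum_const_zero]
    exact Finset.sum_congr rfl fun x _ => by rw [hA x b, hA x c]; ring
  have hT6 : (∑ p, ∑ q, ∑ r, ∑ s, ξ p q * ξ r s * (kron b p * kron r c * kron s q))
      = (∑ a, ξ b a * ξ c a) := by
    simp only [kron, mul_ite, ite_mul, mul_one, one_mul, mul_zero, zero_mul,
      Finset.sum_ite_eq, Finset.sum_ite_eq', Finset.mem_univ, if_true, Finset.sum_ite_irrel,
      Finset.sum_const_zero]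
  have hNrev : (∑ p, ∑ q, ξ p q * ξ q p) = -(∑ p, ∑ q, ξ p q * ξ p q) := by
    rw [← Finset.sum_neg_distrib]
    refine Finset.sum_congr rfl fun p _ => ?_
    rw [← Finset.sum_neg_distrib]
    exact Finset.sum_congr rfl fun q _ => by rw [hA q p]; ring
  have hT7 : (∑ p, ∑ q, ∑ r, ∑ s, ξ p q * ξ r s * (kron b c * Φ r s p q))
      = kron b c * (-6 * (∑ p, ∑ q, ξ p q * ξ p q)) := by
    rw [aux_swap22 (fun p q r s => ξ p q * ξ r s * (kron b c * Φ r s p q))]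
    have key : ∀ r s : Fin 8, (∑ p, ∑ q, ξ p q * ξ r s * (kron b c * Φ r s p q))
        = kron b c * (-6 * (ξ r s * ξ r s)) := by
      intro r s
      have : (∑ p, ∑ q, ξ p q * ξ r s * (kron b c * Φ r s p q))
          = (kron b c * ξ r s) * ∑ p, ∑ q, Φ r s p q * ξ p q := by
        rw [Finset.mul_sum]
        refine Finset.sum_congr rfl fun p _ => ?_
        rw [Finset.mul_sum]
        exact Finset.sum_congr rfl fun q _ => by ring
      rw [this, hc r s]; ring
    calc (∑ r, ∑ s, ∑ p, ∑ q, ξ p q * ξ r s * (kron b c * Φ r s p q))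
        = ∑ r, ∑ s, kron b c * (-6 * (ξ r s * ξ r s)) :=
          Finset.sum_congr rfl fun r _ => Finset.sum_congr rfl fun s _ => key r s
      _ = kron b c * (-6 * (∑ p, ∑ q, ξ p q * ξ p q)) := by
          simp only [← Finset.mul_sum]
  have hT8 : (∑ p, ∑ q, ∑ r, ∑ s, ξ p q * ξ r s * (kron r c * Φ s b p q))
      = 6 * (∑ a, ξ b a * ξ c a) := by
    simp only [kron, mul_ite, ite_mul, mul_one, one_mul, mul_zero, zero_mul,
      Finset.sum_ite_eq, Finset.sum_ite_eq', Finset.mem_univ, if_true, Finset.sum_ite_irrel,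
      Finset.sum_const_zero]
    rw [aux_rot3 (fun p q s => ξ p q * ξ c s * Φ s b p q), Finset.mul_sum]
    refine Finset.sum_congr rfl fun s _ => ?_
    have : (∑ p, ∑ q, ξ p q * ξ c s * Φ s b p q)
        = ξ c s * ∑ p, ∑ q, Φ s b p q * ξ p q := by
      rw [Finset.mul_sum]
      refine Finset.sum_congr rfl fun p _ => ?_
      rw [Finset.mul_sum]
      exact Finset.sum_congr rfl fun q _ => by ring
    rw [this, hc s b, hA s b]; ring
  have hT9 : (∑ p, ∑ q, ∑ r, ∑ s, ξ p q * ξ r s * (kron s c * Φ b r p q))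
      = 6 * (∑ a, ξ b a * ξ c a) := by
    simp only [kron, mul_ite, ite_mul, mul_one, one_mul, mul_zero, zero_mul,
      Finset.sum_ite_eq, Finset.sum_ite_eq', Finset.mem_univ, if_true, Finset.sum_ite_irrel,
      Finset.sum_const_zero]
    rw [aux_rot3 (fun p q r => ξ p q * ξ r c * Φ b r p q), Finset.mul_sum]
    refine Finset.sum_congr rfl fun r _ => ?_
    have : (∑ p, ∑ q, ξ p q * ξ r c * Φ b r p q)
        = ξ r c * ∑ p, ∑ q, Φ b r p q * ξ p q := by
      rw [Finset.mul_sum]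
      refine Finset.sum_congr rfl fun p _ => ?_
      rw [Finset.mul_sum]
      exact Finset.sum_congr rfl fun q _ => by ring
    rw [this, hc b r, hA r c]; ring
  have hT10 : (∑ p, ∑ q, ∑ r, ∑ s, ξ p q * ξ r s * (kron b p * Φ r s q c))
      = 6 * (∑ a, ξ b a * ξ c a) := by
    simp only [kron, mul_ite, ite_mul, mul_one, one_mul, mul_zero, zero_mul,
      Finset.sum_ite_eq, Finset.sum_ite_eq', Finset.mem_univ, if_true, Finset.sum_ite_irrel,
      Finset.sum_const_zero]
    rw [Finset.mul_sum]
    refine Finset.sum_congr rfl fun q _ => ?_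
    have : (∑ r, ∑ s, ξ b q * ξ r s * Φ r s q c)
        = ξ b q * ∑ r, ∑ s, Φ q c r s * ξ r s := by
      rw [Finset.mul_sum]
      refine Finset.sum_congr rfl fun r _ => ?_
      rw [Finset.mul_sum]
      exact Finset.sum_congr rfl fun s _ => by rw [hpair q c r s]; ring
    rw [this, hc q c, hA q c]; ring
  have hT13 : (∑ p, ∑ q, ∑ r, ∑ s, ξ p q * ξ r s * (kron b q * Φ r s c p))
      = 6 * (∑ a, ξ b a * ξ c a) := by
    simp only [kron, mul_ite, ite_mul, mul_one, one_mul, mul_zero, zero_mul,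
      Finset.sum_ite_eq, Finset.sum_ite_eq', Finset.mem_univ, if_true, Finset.sum_ite_irrel,
      Finset.sum_const_zero]
    rw [Finset.mul_sum]
    refine Finset.sum_congr rfl fun p _ => ?_
    have : (∑ r, ∑ s, ξ p b * ξ r s * Φ r s c p)
        = ξ p b * ∑ r, ∑ s, Φ c p r s * ξ r s := by
      rw [Finset.mul_sum]
      refine Finset.sum_congr rfl fun r _ => ?_
      rw [Finset.mul_sum]
      exact Finset.sum_congr rfl fun s _ => by rw [hpair c p r s]; ring
    rw [this, hc c p, hA p b]; ring
  have hT11 : (∑ p, ∑ q, ∑ r, ∑ s, ξ p q * ξ r s * (kron r p * Φ s b q c))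
      = 0 := by
    simp only [kron, mul_ite, ite_mul, mul_one, one_mul, mul_zero, zero_mul,
      Finset.sum_ite_eq, Finset.sum_ite_eq', Finset.mem_univ, if_true, Finset.sum_ite_irrel,
      Finset.sum_const_zero]
    calc (∑ p, ∑ q, ∑ s, ξ p q * ξ p s * Φ s b q c)
        = ∑ p : Fin 8, (0:ℝ) := Finset.sum_congr rfl fun p _ =>
          aux_sum_antisym _ (fun q s => by rw [hsw13 s b q c]; ring)
      _ = 0 := by simp
  have hT12 : (∑ p, ∑ q, ∑ r, ∑ s, ξ p q * ξ r s * (kron s p * Φ b r q c))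
      = 0 := by
    simp only [kron, mul_ite, ite_mul, mul_one, one_mul, mul_zero, zero_mul,
      Finset.sum_ite_eq, Finset.sum_ite_eq', Finset.mem_univ, if_true, Finset.sum_ite_irrel,
      Finset.sum_const_zero]
    calc (∑ p, ∑ q, ∑ r, ξ p q * ξ r p * Φ b r q c)
        = ∑ p : Fin 8, (0:ℝ) := Finset.sum_congr rfl fun p _ =>
          aux_sum_antisym _ (fun q r => by
            rw [(hΦ b r q c).2.1, hA r p, hA q p]; ring)
      _ = 0 := by simp
  have hT14 : (∑ p, ∑ q, ∑ r, ∑ s, ξ p q * ξ r s * (kron r q * Φ s b c p))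
      = 0 := by
    simp only [kron, mul_ite, ite_mul, mul_one, one_mul, mul_zero, zero_mul,
      Finset.sum_ite_eq, Finset.sum_ite_eq', Finset.mem_univ, if_true, Finset.sum_ite_irrel,
      Finset.sum_const_zero]
    rw [Finset.sum_comm]
    calc (∑ q, ∑ p, ∑ s, ξ p q * ξ q s * Φ s b c p)
        = ∑ q : Fin 8, (0:ℝ) := Finset.sum_congr rfl fun q _ =>
          aux_sum_antisym _ (fun p s => by rw [hsw14 p b c s, hA s q, hA q p]; ring)
      _ = 0 := by simp
  have hT15 : (∑ p, ∑ q, ∑ r, ∑ s, ξ p q * ξ r s * (kron s q * Φ b r c p))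
      = 0 := by
    simp only [kron, mul_ite, ite_mul, mul_one, one_mul, mul_zero, zero_mul,
      Finset.sum_ite_eq, Finset.sum_ite_eq', Finset.mem_univ, if_true, Finset.sum_ite_irrel,
      Finset.sum_const_zero]
    rw [Finset.sum_comm]
    calc (∑ q, ∑ p, ∑ r, ξ p q * ξ r q * Φ b r c p)
        = ∑ q : Fin 8, (0:ℝ) := Finset.sum_congr rfl fun q _ =>
          aux_sum_antisym _ (fun p r => by rw [hsw24 b p c r]; ring)
      _ = 0 := by simp
  have hC : ∀ i j k a b c : Fin 8,
      (∑ p, Φ i j k p * Φ a b c p) =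
        kron i a * kron j b * kron k c + kron i b * kron j c * kron k a
          + kron i c * kron j a * kron k b
        - kron i a * kron j c * kron k b - kron i c * kron j b * kron k a
        - kron i b * kron j a * kron k c
        - kron i a * Φ j k b c - kron j a * Φ k i b c - kron k a * Φ i j b c
        - kron i b * Φ j k c a - kron j b * Φ k i c a - kron k b * Φ i j c a
        - kron i c * Φ j k a b - kron j c * Φ k i a b - kron k c * Φ i j a b := hCayley
  have main : 36 * (∑ a, ξ b a * ξ c a)
      = 8 * (kron b c * (∑ p, ∑ q, ξ p q * ξ p q)) - 28 * (∑ a, ξ b a * ξ c a) := by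
    rw [step1, step2]
    simp only [hC]
    simp only [mul_add, mul_sub, Finset.sum_add_distrib, Finset.sum_sub_distrib]
    rw [hT1, hT2, hT3, hT4, hT5, hT6, hT7, hT8, hT9, hT10, hT11, hT12, hT13, hT14, hT15,
      hNrev]
    ring
  linear_combination main / 64
end
end Spin7
end
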